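/- arXiv:math/0309169 — 3 statements merged into one kernel-verified Lean document; each statement's English description precedes it below -/
import Mathlib

section
/- Let α > 0. Let u_α and u₂ be complex-valued functions that are C¹ on a neighborhood of a point p = (x₁⁰, x₂⁰, 0, 0) in the closed quadrant Q = ℝ² × [0,∞) × [0,∞) (with coordinates (x₁, x₂, Y₁, Y₂)). Assume: (i) u_α = 0 on {Y₁ = 0} ∩ Q; (ii) u₂ = 0 on {Y₂ = 0} ∩ Q; (iii) on {Y₁ = 0} ∩ Q one has −iα ∂u_α/∂Y₁ = ∂u₂/∂x₁ − α ∂u₂/∂x₂ + i((1+α²) ∂u₂/∂Y₁ − α ∂u₂/∂Y₂). Then at the point p one has ∂u₂/∂Y₂ = ∂u_α/∂Y₁. -/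
noncomputable section

/-- Points of `ℝ⁴` with coordinates `(x₁, x₂, Y₁, Y₂)`. -/
abbrev E4 : Type := ℝ × ℝ × ℝ × ℝ

def e1 : E4 := (1, 0, 0, 0)
def e2 : E4 := (0, 1, 0, 0)
def e3 : E4 := (0, 0, 1, 0)
def e4 : E4 := (0, 0, 0, 1)

def Y1 (q : E4) : ℝ := q.2.2.1
def Y2 (q : E4) : ℝ := q.2.2.2

/-- The closed quadrant `Q = ℝ² × [0,∞) × [0,∞)`. -/
def Q : Set E4 := {q | 0 ≤ Y1 q ∧ 0 ≤ Y2 q}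

/-- compatibility of the boundary conditions along the edge.  `uα` and `u2` are
`C¹` on a neighborhood of `p = (x₁⁰, x₂⁰, 0, 0)` in `Q`, in the sense that they are
differentiable at interior points with derivatives `Dα`, `D2` which (together with the
functions themselves) are continuous on the neighborhood in `Q`; the boundary conditions
(i)–(iii) hold on `{Y₁ = 0} ∩ Q` resp. `{Y₂ = 0} ∩ Q`; then `∂u₂/∂Y₂ = ∂uα/∂Y₁` at `p`. -/
theorem edge_compatibility (α : ℝ) (hα : 0 < α) (x₁ x₂ : ℝ)
    (uα u2 : E4 → ℂ) (Dα D2 : E4 → E4 →L[ℝ] ℂ)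
    (V : Set E4) (hV : IsOpen V) (hpV : ((x₁, x₂, (0:ℝ), (0:ℝ)) : E4) ∈ V)
    (huα : ContinuousOn uα (V ∩ Q)) (hu2 : ContinuousOn u2 (V ∩ Q))
    (hDα : ContinuousOn Dα (V ∩ Q)) (hD2 : ContinuousOn D2 (V ∩ Q))
    (hdα : ∀ q ∈ V ∩ {q : E4 | 0 < Y1 q ∧ 0 < Y2 q}, HasFDerivAt uα (Dα q) q)
    (hd2 : ∀ q ∈ V ∩ {q : E4 | 0 < Y1 q ∧ 0 < Y2 q}, HasFDerivAt u2 (D2 q) q)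
    (hbc1 : ∀ q ∈ V ∩ Q, Y1 q = 0 → uα q = 0)
    (hbc2 : ∀ q ∈ V ∩ Q, Y2 q = 0 → u2 q = 0)
    (hbc3 : ∀ q ∈ V ∩ Q, Y1 q = 0 →
      -Complex.I * (α : ℂ) * Dα q e3 =
        D2 q e1 - (α : ℂ) * D2 q e2 +
          Complex.I * ((1 + (α : ℂ) ^ 2) * D2 q e3 - (α : ℂ) * D2 q e4)) :
    D2 ((x₁, x₂, 0, 0) : E4) e4 = Dα ((x₁, x₂, 0, 0) : E4) e3 := by
  classical
  set p : E4 := ((x₁, x₂, 0, 0) : E4) with hp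
  have hpQ : p ∈ Q := by
    constructor <;> simp [Y1, Y2, hp]
  have hpVQ : p ∈ V ∩ Q := ⟨hpV, hpQ⟩
  -- choose a radius with closed ball inside V
  obtain ⟨r', hr', hball'⟩ : ∃ r' > 0, Metric.ball p r' ⊆ V :=
    Metric.mem_nhds_iff.1 (hV.mem_nhds hpV)
  set r : ℝ := r' / 2 with hrdef
  have hr : 0 < r := by positivity
  have hball : Metric.ball p r ⊆ V := fun q hq =>
    hball' (by
      have : dist q p < r := hq
      exact lt_of_lt_of_le this (by linarith))
  -- the open convex set
  set s : Set E4 := Metric.ball p r ∩ {q : E4 | 0 < Y1 q ∧ 0 < Y2 q} with hsdef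
  have hY1lin : IsLinearMap ℝ Y1 := ⟨fun a b => rfl, fun c a => rfl⟩
  have hY2lin : IsLinearMap ℝ Y2 := ⟨fun a b => rfl, fun c a => rfl⟩
  have hY1cont : Continuous Y1 :=
    (continuous_fst.comp (continuous_snd.comp continuous_snd))
  have hY2cont : Continuous Y2 :=
    (continuous_snd.comp (continuous_snd.comp continuous_snd))
  have hs_open : IsOpen s := by
    apply Metric.isOpen_ball.inter
    have : ({q : E4 | 0 < Y1 q ∧ 0 < Y2 q}) =
        {q : E4 | 0 < Y1 q} ∩ {q : E4 | 0 < Y2 q} := rfl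
    rw [this]
    exact (isOpen_lt continuous_const hY1cont).inter (isOpen_lt continuous_const hY2cont)
  have hs_conv : Convex ℝ s := by
    apply (convex_ball p r).inter
    have : ({q : E4 | 0 < Y1 q ∧ 0 < Y2 q}) =
        {q : E4 | 0 < Y1 q} ∩ {q : E4 | 0 < Y2 q} := rfl
    rw [this]
    exact (convex_halfSpace_gt hY1lin 0).inter (convex_halfSpace_gt hY2lin 0)
  have hsVQ : s ⊆ V ∩ Q := fun q hq => ⟨hball hq.1, hq.2.1.le, hq.2.2.le⟩
  have hsVpos : s ⊆ V ∩ {q : E4 | 0 < Y1 q ∧ 0 < Y2 q} := fun q hq => ⟨hball hq.1, hq.2⟩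
  -- ball ∩ Q is contained in closure s
  have hclos : Metric.ball p r ∩ Q ⊆ closure s := by
    rintro q ⟨hqb, hq1, hq2⟩
    have hten : Filter.Tendsto (fun ε : ℝ => q + ε • (e3 + e4)) (nhdsWithin 0 (Set.Ioi 0))
        (nhds q) := by
      have : Filter.Tendsto (fun ε : ℝ => q + ε • (e3 + e4)) (nhds 0) (nhds q) := by
        have hc : Continuous (fun ε : ℝ => q + ε • (e3 + e4)) := by fun_prop
        simpa using hc.tendsto 0
      exact this.mono_left nhdsWithin_le_nhds
    apply mem_closure_of_tendsto hten
    have hev : ∀ᶠ ε : ℝ in nhdsWithin 0 (Set.Ioi 0), q + ε • (e3 + e4) ∈ Metric.ball p r := by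
      have : Metric.ball p r ∈ nhds q := Metric.isOpen_ball.mem_nhds hqb
      have h2 := hten this
      exact h2
    filter_upwards [hev, self_mem_nhdsWithin] with ε hε hε0
    refine ⟨hε, ?_, ?_⟩
    · show (0:ℝ) < Y1 (q + ε • (e3 + e4))
      have : Y1 (q + ε • (e3 + e4)) = Y1 q + ε := by
        simp [Y1, e3, e4, Prod.ext_iff]
      rw [this]
      have : (0:ℝ) < ε := hε0
      linarith
    · show (0:ℝ) < Y2 (q + ε • (e3 + e4))
      have : Y2 (q + ε • (e3 + e4)) = Y2 q + ε := by
        simp [Y2, e3, e4, Prod.ext_iff]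
      rw [this]
      have : (0:ℝ) < ε := hε0
      linarith
  -- apply the extension theorem
  have hdiff : DifferentiableOn ℝ u2 s := fun q hq =>
    ((hd2 q (hsVpos hq)).differentiableAt).differentiableWithinAt
  have hcont : ∀ y ∈ closure s, ContinuousWithinAt u2 s y := by
    intro y hy
    have hys : closure s ⊆ V ∩ Q := by
      have h1 : closure s ⊆ Metric.closedBall p r ∩ Q := by
        apply closure_minimal _ (Metric.isClosed_closedBall.inter (by
          have : Q = Y1 ⁻¹' Set.Ici 0 ∩ Y2 ⁻¹' Set.Ici 0 := rfl
          rw [this]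
          exact (isClosed_Ici.preimage hY1cont).inter (isClosed_Ici.preimage hY2cont)))
        exact fun q hq => ⟨Metric.ball_subset_closedBall hq.1, hq.2.1.le, hq.2.2.le⟩
      intro q hq
      rcases h1 hq with ⟨hq1, hq2⟩
      refine ⟨hball' ?_, hq2⟩
      have : dist q p ≤ r := hq1
      exact lt_of_le_of_lt this (by rw [hrdef]; linarith)
    exact ((hu2 y (hys hy)).mono hsVQ)
  have htends : Filter.Tendsto (fun y => fderiv ℝ u2 y) (nhdsWithin p s) (nhds (D2 p)) := by
    have h1 : Filter.Tendsto D2 (nhdsWithin p s) (nhds (D2 p)) :=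
      (hD2 p hpVQ).mono_left (nhdsWithin_mono p hsVQ)
    apply h1.congr'
    filter_upwards [self_mem_nhdsWithin] with q hq
    exact ((hd2 q (hsVpos hq)).fderiv).symm
  have H : HasFDerivWithinAt u2 (D2 p) (closure s) p :=
    hasFDerivWithinAt_closure_of_tendsto_fderiv hdiff hs_conv hs_open hcont htends
  -- the face T
  set T : Set E4 := Metric.ball p r ∩ Q ∩ {q : E4 | Y2 q = 0} with hTdef
  have hTclos : T ⊆ closure s := fun q hq => hclos hq.1
  have HT : HasFDerivWithinAt (fun _ : E4 => (0:ℂ)) (D2 p) T p := by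
    refine (H.mono hTclos).congr (fun q hq => ?_) ?_
    · exact (hbc2 q ⟨hball hq.1.1, hq.1.2⟩ hq.2).symm
    · exact (hbc2 p hpVQ (by simp [Y2, hp])).symm
  -- key: tangential derivatives vanish
  have key : ∀ v : E4, 0 ≤ Y1 v → Y2 v = 0 → D2 p v = 0 := by
    intro v hv1 hv2
    have dtop : ∀ᶠ t : ℝ in nhdsWithin 0 (Set.Ioi 0), p + t • v ∈ T := by
      have hten : Filter.Tendsto (fun t : ℝ => p + t • v) (nhdsWithin 0 (Set.Ioi 0))
          (nhds p) := by
        have h0 : Filter.Tendsto (fun t : ℝ => p + t • v) (nhds 0) (nhds p) := by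
          have hc : Continuous (fun t : ℝ => p + t • v) := by fun_prop
          simpa using hc.tendsto 0
        exact h0.mono_left nhdsWithin_le_nhds
      have hev : ∀ᶠ t : ℝ in nhdsWithin 0 (Set.Ioi 0), p + t • v ∈ Metric.ball p r :=
        hten (Metric.isOpen_ball.mem_nhds (Metric.mem_ball_self hr))
      filter_upwards [hev, self_mem_nhdsWithin] with t ht ht0
      have ht0' : (0:ℝ) < t := ht0
      refine ⟨⟨ht, ?_, ?_⟩, ?_⟩
      · show (0:ℝ) ≤ Y1 (p + t • v)
        have : Y1 (p + t • v) = t * Y1 v := by simp [Y1, hp, Prod.ext_iff]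
        rw [this]; exact mul_nonneg ht0'.le hv1
      · show (0:ℝ) ≤ Y2 (p + t • v)
        have : Y2 (p + t • v) = t * Y2 v := by simp [Y2, hp, Prod.ext_iff]
        rw [this, hv2, mul_zero]
      · show Y2 (p + t • v) = 0
        have : Y2 (p + t • v) = t * Y2 v := by simp [Y2, hp, Prod.ext_iff]
        rw [this, hv2, mul_zero]
    have clim : Filter.Tendsto (fun t : ℝ => ‖t⁻¹‖) (nhdsWithin 0 (Set.Ioi 0))
        Filter.atTop := by
      apply Filter.Tendsto.congr' _ tendsto_inv_nhdsGT_zero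
      filter_upwards [self_mem_nhdsWithin] with t ht
      have : (0:ℝ) < t := ht
      rw [Real.norm_eq_abs, abs_of_pos (by positivity)]
    have cdlim : Filter.Tendsto (fun t : ℝ => t⁻¹ • (t • v)) (nhdsWithin 0 (Set.Ioi 0))
        (nhds v) := by
      apply Filter.Tendsto.congr' _ tendsto_const_nhds
      filter_upwards [self_mem_nhdsWithin] with t ht
      have ht' : (t:ℝ) ≠ 0 := ne_of_gt ht
      rw [smul_smul, inv_mul_cancel₀ ht', one_smul]
    have hlim := HT.lim (l := nhdsWithin (0:ℝ) (Set.Ioi 0)) (c := fun t : ℝ => t⁻¹)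
      (d := fun t : ℝ => t • v) (by
        have hc : Continuous (fun t : ℝ => t • v) := by fun_prop
        simpa using (hc.tendsto 0).mono_left nhdsWithin_le_nhds) dtop cdlim
    have hzero : Filter.Tendsto (fun t : ℝ =>
        t⁻¹ • ((fun _ : E4 => (0:ℂ)) (p + t • v) - (fun _ : E4 => (0:ℂ)) p))
        (nhdsWithin (0:ℝ) (Set.Ioi 0)) (nhds 0) := by
      simpa using (tendsto_const_nhds :
        Filter.Tendsto (fun _ : ℝ => (0:ℂ)) (nhdsWithin (0:ℝ) (Set.Ioi 0)) (nhds 0))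
    exact (tendsto_nhds_unique hzero hlim).symm
  have h1 : D2 p e1 = 0 := key e1 (by norm_num [Y1, e1]) (by norm_num [Y2, e1])
  have h2 : D2 p e2 = 0 := key e2 (by norm_num [Y1, e2]) (by norm_num [Y2, e2])
  have h3 : D2 p e3 = 0 := key e3 (by norm_num [Y1, e3]) (by norm_num [Y2, e3])
  have hbc := hbc3 p hpVQ (by simp [Y1, hp])
  rw [h1, h2, h3] at hbc
  have hαC : (α : ℂ) ≠ 0 := by exact_mod_cast ne_of_gt hα
  have hcancel : (-Complex.I * (α:ℂ)) ≠ 0 := by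
    simp [Complex.I_ne_zero, hαC]
  apply mul_left_cancel₀ hcancel
  rw [show (-Complex.I * (α:ℂ)) * D2 p e4 = -((Complex.I * (α:ℂ)) * D2 p e4) by ring]
  rw [show (-Complex.I * (α:ℂ)) * Dα p e3 = -Complex.I * (α:ℂ) * Dα p e3 by ring, hbc]
  ring
end
end

section
/- Fix α ≥ 0. For Y₁ ∈ ℝ and Y₂ > 0 define F(Y₁, Y₂) = ∫_{{t ∈ ℝ : |t| ≥ 1}} e^{−|t|(1−iα)Y₂ + i t Y₁} / |t| dt (an absolutely convergent integral). Then there exists a function h : ℝ² → ℂ that is real-analytic (in particular C^∞) on all of ℝ², such that for all Y₁ ∈ ℝ and Y₂ > 0: F(Y₁, Y₂) = −Log(Y₁² + (1−iα)²Y₂²) + h(Y₁, Y₂), where Log denotes the principal branch of the complex logarithm. -/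
noncomputable section

open MeasureTheory Set Filter
open scoped Real Topology

namespace LogSingAux

def E1 (z : ℂ) : ℂ := ∫ t in Ioi (1:ℝ), Complex.exp (-(t:ℂ) * z) / (t:ℂ)

def Phi (z : ℂ) : ℂ := ∫ s in Ioc (0:ℝ) 1, (1 - Complex.exp (-(s:ℂ) * z)) / (s:ℂ)

lemma norm_exp_neg (t : ℝ) (z : ℂ) :
    ‖Complex.exp (-(t:ℂ) * z)‖ = Real.exp (-z.re * t) := by
  rw [Complex.norm_exp]
  congr 1
  simp [Complex.mul_re]
  ring

lemma integrableOn_exp_kernel {z : ℂ} (hz : 0 < z.re) :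
    IntegrableOn (fun t : ℝ => Complex.exp (-(t:ℂ) * z)) (Ioi (1:ℝ)) := by
  apply Integrable.mono' (exp_neg_integrableOn_Ioi 1 hz)
  · exact (Complex.continuous_exp.comp (by continuity)).aestronglyMeasurable
  · filter_upwards with t
    rw [norm_exp_neg]

lemma integrableOn_E1_kernel {z : ℂ} (hz : 0 < z.re) :
    IntegrableOn (fun t : ℝ => Complex.exp (-(t:ℂ) * z) / (t:ℂ)) (Ioi (1:ℝ)) := by
  apply Integrable.mono' (exp_neg_integrableOn_Ioi 1 hz)
  · apply ContinuousOn.aestronglyMeasurable _ measurableSet_Ioi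
    apply ContinuousOn.div
    · exact (Complex.continuous_exp.comp (by continuity)).continuousOn
    · exact (Complex.continuous_ofReal.comp continuous_id).continuousOn
    · intro t ht
      simpa using (zero_lt_one.trans ht).ne'
  · filter_upwards [ae_restrict_mem measurableSet_Ioi] with t ht
    rw [norm_div, norm_exp_neg]
    have h1 : (1:ℝ) ≤ ‖(t:ℂ)‖ := by
      rw [Complex.norm_real, Real.norm_eq_abs, abs_of_pos (zero_lt_one.trans ht)]
      exact ht.le
    calc Real.exp (-z.re * t) / ‖(t:ℂ)‖ ≤ Real.exp (-z.re * t) / 1 := by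
          apply div_le_div_of_nonneg_left (Real.exp_pos _).le zero_lt_one h1
          -- might not typecheck; fix later
      _ = Real.exp (-z.re * t) := by rw [div_one]


lemma hasDerivAt_exp_neg_t (z : ℂ) (t : ℝ) :
    HasDerivAt (fun t : ℝ => Complex.exp (-(t:ℂ) * z)) (-z * Complex.exp (-(t:ℂ) * z)) t := by
  have h1 : HasDerivAt (fun t : ℝ => -(t:ℂ) * z) (-z) t := by
    simpa using (((hasDerivAt_id ((t:ℝ):ℂ)).neg.mul_const z).comp_ofReal)
  simpa [mul_comm, Function.comp_def] using (Complex.hasDerivAt_exp (-(t:ℂ) * z)).comp t h1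

lemma integral_exp_kernel {z : ℂ} (hz : 0 < z.re) :
    (∫ t in Ioi (1:ℝ), Complex.exp (-(t:ℂ) * z)) = Complex.exp (-z) / z := by
  have hz0 : z ≠ 0 := fun h => by simp [h] at hz
  have hderiv : ∀ t ∈ Ici (1:ℝ),
      HasDerivAt (fun t : ℝ => -(Complex.exp (-(t:ℂ) * z) / z)) (Complex.exp (-(t:ℂ) * z)) t := by
    intro t _
    have := ((hasDerivAt_exp_neg_t z t).div_const z).neg
    refine this.congr_deriv (Eq.symm ?_)
    field_simp
  have htend : Tendsto (fun t : ℝ => -(Complex.exp (-(t:ℂ) * z) / z)) atTop (nhds 0) := by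
    rw [tendsto_zero_iff_norm_tendsto_zero]
    have : (fun t : ℝ => ‖-(Complex.exp (-(t:ℂ) * z) / z)‖)
        = fun t : ℝ => Real.exp (-z.re * t) / ‖z‖ := by
      funext t; rw [norm_neg, norm_div, norm_exp_neg]
    rw [this]
    have h0 : Tendsto (fun t : ℝ => Real.exp (-z.re * t)) atTop (nhds 0) := by
      apply Real.tendsto_exp_atBot.comp
      exact tendsto_id.const_mul_atTop_of_neg (neg_lt_zero.mpr hz)
    simpa using h0.div_const ‖z‖
  have := integral_Ioi_of_hasDerivAt_of_tendsto' hderiv (integrableOn_exp_kernel hz) htend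
  rw [this]
  simp [neg_mul]

lemma E1_hasDerivAt {z₀ : ℂ} (hz : 0 < z₀.re) :
    HasDerivAt E1 (-(Complex.exp (-z₀) / z₀)) z₀ := by
  have hε : 0 < z₀.re / 2 := by linarith
  have key := hasDerivAt_integral_of_dominated_loc_of_deriv_le (μ := volume.restrict (Ioi (1:ℝ)))
    (F := fun (z : ℂ) (t : ℝ) => Complex.exp (-(t:ℂ) * z) / (t:ℂ))
    (F' := fun (z : ℂ) (t : ℝ) => -((t:ℂ)) * Complex.exp (-(t:ℂ) * z) / (t:ℂ))
    (x₀ := z₀) (bound := fun t => Real.exp (-(z₀.re / 2) * t)) (Metric.ball_mem_nhds z₀ hε)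
    ?_ ?_ ?_ ?_ ?_ ?_
  · obtain ⟨-, hd⟩ := key
    refine hd.congr_deriv (Eq.symm ?_)
    have : ∀ t ∈ Ioi (1:ℝ), -((t:ℂ)) * Complex.exp (-(t:ℂ) * z₀) / (t:ℂ)
        = -Complex.exp (-(t:ℂ) * z₀) := by
      intro t ht
      have : (t:ℂ) ≠ 0 := by
        simpa using (zero_lt_one.trans ht).ne'
      field_simp
    rw [setIntegral_congr_fun measurableSet_Ioi this, integral_neg, integral_exp_kernel hz]
  · filter_upwards with z
    apply ContinuousOn.aestronglyMeasurable _ measurableSet_Ioi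
    apply ContinuousOn.div
    · exact (Complex.continuous_exp.comp (by continuity)).continuousOn
    · exact Complex.continuous_ofReal.continuousOn
    · intro t ht; simpa using (zero_lt_one.trans ht).ne'
  · exact integrableOn_E1_kernel hz
  · apply ContinuousOn.aestronglyMeasurable _ measurableSet_Ioi
    apply ContinuousOn.div
    · exact (Continuous.mul (by continuity) (Complex.continuous_exp.comp (by continuity))).continuousOn
    · exact Complex.continuous_ofReal.continuousOn
    · intro t ht; simpa using (zero_lt_one.trans ht).ne'
  · filter_upwards [ae_restrict_mem measurableSet_Ioi] with t ht z hzb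
    have ht0 : (0:ℝ) < t := zero_lt_one.trans ht
    have htc : (t:ℂ) ≠ 0 := by simpa using ht0.ne'
    have : -((t:ℂ)) * Complex.exp (-(t:ℂ) * z) / (t:ℂ) = -Complex.exp (-(t:ℂ) * z) := by
      field_simp
    rw [this, norm_neg, norm_exp_neg]
    apply Real.exp_le_exp.mpr
    have hre : z₀.re / 2 ≤ z.re := by
      have := Complex.abs_re_le_norm (z - z₀)
      rw [Complex.sub_re] at this
      have h2 : ‖z - z₀‖ < z₀.re / 2 := by
        simpa [Complex.dist_eq] using (Metric.mem_ball.mp hzb)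
      have := abs_lt.mp (lt_of_le_of_lt this h2)
      linarith [this.1]
    nlinarith
  · exact exp_neg_integrableOn_Ioi 1 hε
  · filter_upwards [ae_restrict_mem measurableSet_Ioi] with t ht z hzb
    have ht0 : (0:ℝ) < t := zero_lt_one.trans ht
    have h1 : HasDerivAt (fun z : ℂ => -(t:ℂ) * z) (-(t:ℂ)) z := by
      simpa using (hasDerivAt_id z).const_mul (-(t:ℂ))
    have h2 := (Complex.hasDerivAt_exp (-(t:ℂ) * z)).comp z h1
    have := h2.div_const (t:ℂ)
    refine this.congr_deriv (Eq.symm ?_)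
    ring


lemma phi_bound (z : ℂ) {s : ℝ} (hs : s ∈ Ioc (0:ℝ) 1) :
    ‖(1 - Complex.exp (-(s:ℂ) * z)) / (s:ℂ)‖ ≤ ‖z‖ * Real.exp |z.re| := by
  rcases eq_or_ne z 0 with rfl | hz0
  · simp [Real.exp_nonneg]
  have hint : (∫ x in (0:ℝ)..s, Complex.exp ((-z) * x))
      = (Complex.exp ((-z) * s) - Complex.exp ((-z) * 0)) / (-z) :=
    integral_exp_mul_complex (neg_ne_zero.mpr hz0)
  have hkey : 1 - Complex.exp (-(s:ℂ) * z) = z * ∫ x in (0:ℝ)..s, Complex.exp ((-z) * x) := by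
    have hexp : Complex.exp (-(s:ℂ) * z) = Complex.exp ((-z) * s) := by ring_nf
    rw [hexp, hint]
    norm_num
    rw [div_neg, mul_neg, ← mul_div_assoc, mul_div_cancel_left₀ _ hz0]
    ring
  have hnorm : ‖∫ x in (0:ℝ)..s, Complex.exp ((-z) * x)‖ ≤ Real.exp |z.re| * |s - 0| := by
    apply intervalIntegral.norm_integral_le_of_norm_le_const
    intro x hx
    rw [uIoc_of_le hs.1.le] at hx
    rw [Complex.norm_exp]
    apply Real.exp_le_exp.mpr
    have : ((-z) * (x:ℂ)).re = -z.re * x := by simp [Complex.mul_re]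
    rw [this]
    have hx0 : 0 < x := hx.1
    have hx1 : x ≤ 1 := hx.2.trans hs.2
    calc -z.re * x ≤ |z.re| * x := by
          apply mul_le_mul_of_nonneg_right _ hx0.le
          exact (neg_le_abs z.re)
      _ ≤ |z.re| * 1 := by
          apply mul_le_mul_of_nonneg_left hx1 (abs_nonneg _)
      _ = |z.re| := mul_one _
  rw [hkey, norm_div, norm_mul]
  rw [div_le_iff₀ (by simpa [abs_of_pos hs.1] using hs.1 : (0:ℝ) < ‖(s:ℂ)‖)]
  calc ‖z‖ * ‖∫ x in (0:ℝ)..s, Complex.exp ((-z) * x)‖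
      ≤ ‖z‖ * (Real.exp |z.re| * |s - 0|) := by
        apply mul_le_mul_of_nonneg_left hnorm (norm_nonneg _)
    _ = ‖z‖ * Real.exp |z.re| * ‖(s:ℂ)‖ := by
        simp [Complex.norm_real, Real.norm_eq_abs, abs_of_pos hs.1]
        ring

lemma integrableOn_Phi_kernel (z : ℂ) :
    IntegrableOn (fun s : ℝ => (1 - Complex.exp (-(s:ℂ) * z)) / (s:ℂ)) (Ioc (0:ℝ) 1) := by
  apply Integrable.mono' (g := fun _ : ℝ => ‖z‖ * Real.exp |z.re|)
    (integrableOn_const measure_Ioc_lt_top.ne)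
  · apply ContinuousOn.aestronglyMeasurable _ measurableSet_Ioc
    apply ContinuousOn.div
    · exact (continuous_const.sub (Complex.continuous_exp.comp (by continuity))).continuousOn
    · exact Complex.continuous_ofReal.continuousOn
    · intro s hs; simpa using hs.1.ne'
  · filter_upwards [ae_restrict_mem measurableSet_Ioc] with s hs
    exact phi_bound z hs

lemma Phi_hasDerivAt (z₀ : ℂ) :
    HasDerivAt Phi (∫ s in Ioc (0:ℝ) 1, Complex.exp (-(s:ℂ) * z₀)) z₀ := by
  have key := hasDerivAt_integral_of_dominated_loc_of_deriv_le
    (μ := volume.restrict (Ioc (0:ℝ) 1))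
    (F := fun (z : ℂ) (s : ℝ) => (1 - Complex.exp (-(s:ℂ) * z)) / (s:ℂ))
    (F' := fun (z : ℂ) (s : ℝ) => Complex.exp (-(s:ℂ) * z))
    (x₀ := z₀) (bound := fun _ => Real.exp (‖z₀‖ + 1)) (Metric.ball_mem_nhds z₀ zero_lt_one)
    ?_ ?_ ?_ ?_ ?_ ?_
  · exact key.2
  · filter_upwards with z
    apply ContinuousOn.aestronglyMeasurable _ measurableSet_Ioc
    apply ContinuousOn.div
    · exact (continuous_const.sub (Complex.continuous_exp.comp (by continuity))).continuousOn
    · exact Complex.continuous_ofReal.continuousOn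
    · intro s hs; simpa using hs.1.ne'
  · exact integrableOn_Phi_kernel z₀
  · exact (Complex.continuous_exp.comp (by continuity)).aestronglyMeasurable
  · filter_upwards [ae_restrict_mem measurableSet_Ioc] with s hs z hzb
    rw [norm_exp_neg]
    apply Real.exp_le_exp.mpr
    have h1 : -z.re ≤ ‖z‖ := (neg_le_abs z.re).trans (Complex.abs_re_le_norm z)
    have h2 : ‖z‖ ≤ ‖z₀‖ + 1 := by
      have h4 : ‖z‖ - ‖z₀‖ ≤ ‖z - z₀‖ := norm_sub_norm_le z z₀
      have h3 : ‖z - z₀‖ < 1 := by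
        simpa [Complex.dist_eq] using Metric.mem_ball.mp hzb
      linarith
    have hs0 : 0 < s := hs.1
    have hs1 : s ≤ 1 := hs.2
    calc -z.re * s ≤ (‖z₀‖ + 1) * s := by
          apply mul_le_mul_of_nonneg_right _ hs0.le
          linarith
      _ ≤ (‖z₀‖ + 1) * 1 := by
          apply mul_le_mul_of_nonneg_left hs1
          positivity
      _ = ‖z₀‖ + 1 := mul_one _
  · exact integrableOn_const measure_Ioc_lt_top.ne
  · filter_upwards [ae_restrict_mem measurableSet_Ioc] with s hs z hzb
    have hs0 : (s:ℂ) ≠ 0 := by simpa using hs.1.ne'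
    have h1 : HasDerivAt (fun z : ℂ => -(s:ℂ) * z) (-(s:ℂ)) z := by
      simpa using (hasDerivAt_id z).const_mul (-(s:ℂ))
    have h2 := (Complex.hasDerivAt_exp (-(s:ℂ) * z)).comp z h1
    have h3 := ((h2.const_sub 1).div_const (s:ℂ))
    refine h3.congr_deriv (Eq.symm ?_)
    field_simp

lemma Phi_differentiable : Differentiable ℂ Phi :=
  fun z => (Phi_hasDerivAt z).differentiableAt

lemma Phi_deriv {z : ℂ} (hz : z ≠ 0) :
    HasDerivAt Phi ((1 - Complex.exp (-z)) / z) z := by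
  have h := Phi_hasDerivAt z
  convert h using 1
  rw [← intervalIntegral.integral_of_le zero_le_one]
  have : ∀ s : ℝ, Complex.exp (-(s:ℂ) * z) = Complex.exp ((-z) * s) := by
    intro s; ring_nf
  simp_rw [this]
  rw [integral_exp_mul_complex (neg_ne_zero.mpr hz)]
  rw [Complex.ofReal_one, Complex.ofReal_zero, mul_one, mul_zero, Complex.exp_zero,
    div_neg, eq_comm, neg_eq_iff_eq_neg, ← neg_div, neg_sub]


lemma E1_const {z : ℂ} (hz : 0 < z.re) :
    E1 z + Complex.log z - Phi z = E1 1 + Complex.log 1 - Phi 1 := by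
  have hopen : IsOpen {c : ℂ | 0 < c.re} := isOpen_lt continuous_const Complex.continuous_re
  have hder : ∀ w ∈ {c : ℂ | 0 < c.re},
      HasDerivAt (fun w => E1 w + Complex.log w - Phi w) 0 w := by
    intro w hw
    have hw' : 0 < w.re := hw
    have hw0 : w ≠ 0 := fun h => by simp [h] at hw'
    have h1 := E1_hasDerivAt hw'
    have h2 := Complex.hasDerivAt_log (Or.inl hw')
    have h3 := Phi_deriv hw0
    have h4 := (h1.add h2).sub h3
    refine h4.congr_deriv (Eq.symm ?_)
    rw [eq_comm, inv_eq_one_div]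
    field_simp
    ring
  have hdiff : DifferentiableOn ℂ (fun w => E1 w + Complex.log w - Phi w) {c : ℂ | 0 < c.re} :=
    fun w hw => ((hder w hw).differentiableAt).differentiableWithinAt
  have hzero : ∀ w ∈ {c : ℂ | 0 < c.re},
      fderivWithin ℂ (fun w => E1 w + Complex.log w - Phi w) {c : ℂ | 0 < c.re} w = 0 := by
    intro w hw
    rw [fderivWithin_of_isOpen hopen hw, (hder w hw).hasFDerivAt.fderiv]
    ext v
    simp
  exact (convex_halfSpace_re_gt 0).is_const_of_fderivWithin_eq_zero hdiff hzero hz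
    (by simp : (1:ℂ) ∈ {c : ℂ | 0 < c.re})

end LogSingAux

open LogSingAux

/-- for `α ≥ 0` the function
`F(Y₁, Y₂) = ∫_{|t| ≥ 1} e^{−|t|(1−iα)Y₂ + itY₁} / |t| dt` (for `Y₂ > 0`) equals
`−Log(Y₁² + (1−iα)²Y₂²)` plus a function real-analytic on all of `ℝ²`. -/
theorem log_singularity (α : ℝ) (hα : 0 ≤ α) :
    ∃ h : ℝ × ℝ → ℂ, AnalyticOnNhd ℝ h Set.univ ∧
      ∀ Y₁ Y₂ : ℝ, 0 < Y₂ →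
        (∫ t in {t : ℝ | 1 ≤ |t|},
            Complex.exp (-((|t| : ℝ) : ℂ) * (1 - Complex.I * (α : ℂ)) * (Y₂ : ℂ) +
              Complex.I * (t : ℂ) * (Y₁ : ℂ)) / ((|t| : ℝ) : ℂ)) =
          -Complex.log ((Y₁ : ℂ) ^ 2 + (1 - Complex.I * (α : ℂ)) ^ 2 * (Y₂ : ℂ) ^ 2) +
            h (Y₁, Y₂) := by
  set w : ℂ := 1 - Complex.I * (α:ℂ) with hw
  have hwre : w.re = 1 := by simp [hw]
  set C : ℂ := E1 1 + Complex.log 1 - Phi 1 with hC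
  refine ⟨fun p => 2 * C + Phi (w * (p.2:ℂ) + Complex.I * (p.1:ℂ))
      + Phi (w * (p.2:ℂ) - Complex.I * (p.1:ℂ)), ?_, ?_⟩
  · -- analyticity
    have hPhi : AnalyticOnNhd ℝ Phi Set.univ :=
      ((Phi_differentiable.differentiableOn).analyticOnNhd isOpen_univ).restrictScalars
    have h1 : AnalyticOnNhd ℝ (fun p : ℝ × ℝ => ((p.1 : ℝ) : ℂ)) Set.univ := fun x _ =>
      (Complex.ofRealCLM.comp (ContinuousLinearMap.fst ℝ ℝ ℝ)).analyticAt x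
    have h2 : AnalyticOnNhd ℝ (fun p : ℝ × ℝ => ((p.2 : ℝ) : ℂ)) Set.univ := fun x _ =>
      (Complex.ofRealCLM.comp (ContinuousLinearMap.snd ℝ ℝ ℝ)).analyticAt x
    have hp : AnalyticOnNhd ℝ (fun p : ℝ × ℝ => w * (p.2:ℂ) + Complex.I * (p.1:ℂ)) Set.univ :=
      ((analyticOnNhd_const.mul h2).add (analyticOnNhd_const.mul h1))
    have hm : AnalyticOnNhd ℝ (fun p : ℝ × ℝ => w * (p.2:ℂ) - Complex.I * (p.1:ℂ)) Set.univ :=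
      ((analyticOnNhd_const.mul h2).sub (analyticOnNhd_const.mul h1))
    exact (analyticOnNhd_const.add (hPhi.comp hp (Set.mapsTo_univ _ _))).add
      (hPhi.comp hm (Set.mapsTo_univ _ _))
  · intro Y₁ Y₂ hY
    set zp : ℂ := w * (Y₂:ℂ) + Complex.I * (Y₁:ℂ) with hzp
    set zm : ℂ := w * (Y₂:ℂ) - Complex.I * (Y₁:ℂ) with hzm
    have hzpre : zp.re = Y₂ := by
      simp [hzp, Complex.add_re, Complex.mul_re, hwre]
    have hzmre : zm.re = Y₂ := by
      simp [hzm, Complex.sub_re, Complex.mul_re, hwre]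
    have hzp0 : 0 < zp.re := by rw [hzpre]; exact hY
    have hzm0 : 0 < zm.re := by rw [hzmre]; exact hY
    have hzpne : zp ≠ 0 := fun h => by simp [h] at hzp0
    have hzmne : zm ≠ 0 := fun h => by simp [h] at hzm0
    set f : ℝ → ℂ := fun t => Complex.exp (-((|t| : ℝ) : ℂ) * w * (Y₂ : ℂ) +
        Complex.I * (t : ℂ) * (Y₁ : ℂ)) / ((|t| : ℝ) : ℂ) with hf
    -- pointwise identifications
    have hfpos : ∀ t ∈ Ici (1:ℝ), f t = Complex.exp (-(t:ℂ) * zm) / (t:ℂ) := by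
      intro t ht
      have ht0 : (0:ℝ) ≤ t := le_trans zero_le_one ht
      rw [hf]
      simp only [abs_of_nonneg ht0]
      congr 1
      rw [hzm]
      ring
    have hfneg : ∀ t ∈ Ici (1:ℝ), f (-t) = Complex.exp (-(t:ℂ) * zp) / (t:ℂ) := by
      intro t ht
      have ht0 : (0:ℝ) ≤ t := le_trans zero_le_one ht
      rw [hf]
      simp only [abs_neg, abs_of_nonneg ht0, Complex.ofReal_neg]
      congr 1
      rw [hzp]
      ring
    -- the set splits
    have hSet : {t : ℝ | 1 ≤ |t|} = Iic (-1:ℝ) ∪ Ici (1:ℝ) := by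
      ext t
      simp only [Set.mem_setOf_eq, Set.mem_union, mem_Iic, mem_Ici, le_abs]
      constructor
      · rintro (h | h)
        · exact Or.inr h
        · exact Or.inl (by linarith)
      · rintro (h | h)
        · exact Or.inr (by linarith)
        · exact Or.inl h
    -- integrability
    have hintm : IntegrableOn f (Ici (1:ℝ)) := by
      rw [integrableOn_Ici_iff_integrableOn_Ioi]
      exact (integrableOn_E1_kernel hzm0).congr_fun
        (fun t ht => (hfpos t (mem_Ici.mpr (le_of_lt ht))).symm) measurableSet_Ioi
    have hintp : IntegrableOn f (Iic (-1:ℝ)) := by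
      have A : MeasurableEmbedding (fun x : ℝ => -x) :=
        (Homeomorph.neg ℝ).isClosedEmbedding.measurableEmbedding
      have hmap : Measure.map (fun x : ℝ => -x) volume = volume :=
        Measure.map_neg_eq_self (volume : Measure ℝ)
      have := (A.integrableOn_map_iff (f := f) (s := Iic (-1:ℝ)) (μ := volume)).symm
      rw [hmap] at this
      rw [← this]
      have hpre : (fun x : ℝ => -x) ⁻¹' (Iic (-1:ℝ)) = Ici (1:ℝ) := by
        ext x; simp [neg_le]
      rw [hpre]
      rw [integrableOn_Ici_iff_integrableOn_Ioi]
      exact (integrableOn_E1_kernel hzp0).congr_fun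
        (fun t ht => (hfneg t (mem_Ici.mpr (le_of_lt ht))).symm) measurableSet_Ioi
    -- split the integral
    have hdisj : Disjoint (Iic (-1:ℝ)) (Ici (1:ℝ)) :=
      Iic_disjoint_Ici.mpr (by norm_num)
    have hsplit : (∫ t in {t : ℝ | 1 ≤ |t|}, f t)
        = (∫ t in Iic (-1:ℝ), f t) + ∫ t in Ici (1:ℝ), f t := by
      rw [hSet]
      exact setIntegral_union hdisj measurableSet_Ici hintp hintm
    have hIm : (∫ t in Ici (1:ℝ), f t) = E1 zm := by
      rw [integral_Ici_eq_integral_Ioi, E1]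
      exact setIntegral_congr_fun measurableSet_Ioi (fun t ht => hfpos t (mem_Ici.mpr (le_of_lt ht)))
    have hIp : (∫ t in Iic (-1:ℝ), f t) = E1 zp := by
      rw [← integral_comp_neg_Ioi, E1]
      exact setIntegral_congr_fun measurableSet_Ioi (fun t ht => hfneg t (mem_Ici.mpr (le_of_lt ht)))
    -- E1 values
    have hEp : E1 zp = C - Complex.log zp + Phi zp := by
      have := E1_const hzp0
      rw [← hC] at this
      linear_combination this
    have hEm : E1 zm = C - Complex.log zm + Phi zm := by
      have := E1_const hzm0
      rw [← hC] at this
      linear_combination this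
    -- logs add
    have hargp : |Complex.arg zp| < Real.pi / 2 :=
      Complex.abs_arg_lt_pi_div_two_iff.mpr (Or.inl hzp0)
    have hargm : |Complex.arg zm| < Real.pi / 2 :=
      Complex.abs_arg_lt_pi_div_two_iff.mpr (Or.inl hzm0)
    have hlog : Complex.log (zp * zm) = Complex.log zp + Complex.log zm := by
      apply Complex.log_mul hzpne hzmne
      constructor
      · have := (abs_lt.mp hargp).1
        have := (abs_lt.mp hargm).1
        have hpi := Real.pi_pos
        linarith
      · have := (abs_lt.mp hargp).2
        have := (abs_lt.mp hargm).2
        linarith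
    have hprod : zp * zm = (Y₁:ℂ)^2 + w^2 * (Y₂:ℂ)^2 := by
      rw [hzp, hzm]
      ring_nf
      rw [Complex.I_sq]
      ring
    -- conclude
    calc (∫ t in {t : ℝ | 1 ≤ |t|}, f t)
        = E1 zp + E1 zm := by rw [hsplit, hIp, hIm]
      _ = -(Complex.log zp + Complex.log zm) + (2*C + Phi zp + Phi zm) := by
          rw [hEp, hEm]; ring
      _ = -Complex.log ((Y₁:ℂ)^2 + w^2 * (Y₂:ℂ)^2) + (2*C + Phi zp + Phi zm) := by
          rw [← hlog, hprod]
end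
end

section
/- Fix α ≥ 0. For Y₁ ∈ ℝ and Y₂ > 0 define G(Y₁, Y₂) = ∫_{{t ∈ ℝ : |t| ≥ 1}} e^{−|t|(1−iα)Y₂ + i t Y₁} / t dt (an absolutely convergent integral). Then there exists a function h : ℝ² → ℂ that is real-analytic (in particular C^∞) on all of ℝ², such that for all Y₁ ∈ ℝ and Y₂ > 0: G(Y₁, Y₂) = Log((1−iα)Y₂ + iY₁) − Log((1−iα)Y₂ − iY₁) + h(Y₁, Y₂), where Log denotes the principal branch of the complex logarithm; the difference of logarithms equals 2i·arctan(Y₁/((1−iα)Y₂)) where arctan w := (1/(2i)) Log((1 + iw)/(1 − iw)). -/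
noncomputable section

open MeasureTheory Set Filter
open scoped Real

/-- The complex arctangent `arctan w = (1/(2i)) Log((1 + iw)/(1 − iw))`, with `Log` the
principal branch of the complex logarithm. -/
def arctanC (w : ℂ) : ℂ :=
  (2 * Complex.I)⁻¹ * Complex.log ((1 + Complex.I * w) / (1 - Complex.I * w))

lemma log_div_of_re_pos {a b : ℂ} (ha : 0 < a.re) (hb : 0 < b.re) :
    Complex.log (b / a) = Complex.log b - Complex.log a := by
  have ha0 : a ≠ 0 := fun h => by simp [h] at ha
  have hb0 : b ≠ 0 := fun h => by simp [h] at hb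
  have haa := abs_lt.mp (Complex.abs_arg_lt_pi_div_two_iff.mpr (Or.inl ha))
  have hba := abs_lt.mp (Complex.abs_arg_lt_pi_div_two_iff.mpr (Or.inl hb))
  have hane : Complex.arg a ≠ π := by
    intro h; have := Real.pi_pos; rw [h] at haa; linarith [haa.2]
  have hinv : Complex.arg a⁻¹ = - Complex.arg a := by
    rw [Complex.arg_inv, if_neg hane]
  rw [div_eq_mul_inv, Complex.log_mul hb0 (inv_ne_zero ha0), Complex.log_inv _ hane,
    sub_eq_add_neg]
  rw [hinv]
  have := Real.pi_pos
  exact ⟨by linarith [hba.1, haa.2], by linarith [hba.2, haa.1]⟩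

def F (z : ℂ) : ℂ := ∫ t in Ioi (1:ℝ), Complex.exp (-z * t) / t

lemma norm_exp_mul (z : ℂ) (t : ℝ) : ‖Complex.exp (-z * t)‖ = Real.exp (-z.re * t) := by
  rw [Complex.norm_exp]; congr 1; simp [Complex.mul_re]

lemma meas1 (z : ℂ) : AEStronglyMeasurable (fun t : ℝ => Complex.exp (-z * t) / t)
    (volume.restrict (Ioi 1)) := by
  apply ContinuousOn.aestronglyMeasurable _ measurableSet_Ioi
  apply ContinuousOn.div
  · exact (Complex.continuous_exp.comp (by continuity)).continuousOn
  · exact Complex.continuous_ofReal.continuousOn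
  · intro t ht
    simp only [ne_eq, Complex.ofReal_eq_zero]
    exact ne_of_gt (lt_trans one_pos ht)

lemma exp_integrableOn {z : ℂ} (hz : 0 < z.re) :
    IntegrableOn (fun t : ℝ => Complex.exp (-z * t)) (Ioi 1) := by
  apply Integrable.mono' (exp_neg_integrableOn_Ioi 1 hz)
    (Complex.continuous_exp.comp (by continuity : Continuous fun t : ℝ => -z * t)).aestronglyMeasurable
  filter_upwards with t
  exact (norm_exp_mul z t).le

lemma F_integrableOn {z : ℂ} (hz : 0 < z.re) :
    IntegrableOn (fun t : ℝ => Complex.exp (-z * t) / t) (Ioi 1) := by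
  apply Integrable.mono' (exp_neg_integrableOn_Ioi 1 hz) (meas1 z)
  filter_upwards [ae_restrict_mem measurableSet_Ioi] with t ht
  rw [norm_div, norm_exp_mul, Complex.norm_real, Real.norm_eq_abs,
    abs_of_pos (lt_trans one_pos ht)]
  nth_rewrite 2 [show Real.exp (-z.re * t) = Real.exp (-z.re * t) / 1 from (div_one _).symm]
  exact div_le_div_of_nonneg_left (Real.exp_pos _).le one_pos ht.le

lemma integral_exp_Ioi {z : ℂ} (hz : 0 < z.re) :
    ∫ t in Ioi (1:ℝ), Complex.exp (-z * t) = Complex.exp (-z) / z := by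
  have hz0 : z ≠ 0 := fun h => by simp [h] at hz
  refine tendsto_nhds_unique
    (intervalIntegral_tendsto_integral_Ioi 1 (exp_integrableOn hz) Filter.tendsto_id) ?_
  have heq : ∀ b : ℝ, ∫ t in (1:ℝ)..b, Complex.exp (-z * t)
      = (Complex.exp (-z * b) - Complex.exp (-z * 1)) / (-z) := fun b => by
    rw [integral_exp_mul_complex (neg_ne_zero.mpr hz0)]
    norm_num
  simp_rw [heq]
  have hlim : Filter.Tendsto (fun b : ℝ => Complex.exp (-z * b)) Filter.atTop (nhds 0) := by
    rw [tendsto_zero_iff_norm_tendsto_zero]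
    simp_rw [norm_exp_mul]
    have hmul : Filter.Tendsto (fun b : ℝ => -z.re * b) Filter.atTop Filter.atBot := by
      simp_rw [neg_mul]
      rw [Filter.tendsto_neg_atBot_iff]
      exact Filter.Tendsto.const_mul_atTop hz Filter.tendsto_id
    exact Real.tendsto_exp_atBot.comp hmul
  have h3 := (hlim.sub (tendsto_const_nhds (x := Complex.exp (-z * 1)))).div_const (-z)
  convert h3 using 2
  rw [mul_one]
  · simp
  · rw [mul_one, zero_sub, neg_div_neg_eq]

def Ein (z : ℂ) : ℂ := ∫ t in Ioc (0:ℝ) 1, (1 - Complex.exp (-z * t)) / t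

lemma hasDerivAt_inner (t : ℝ) (ht : t ≠ 0) (z : ℂ) :
    HasDerivAt (fun w : ℂ => Complex.exp (-w * t) / t) (-Complex.exp (-z * t)) z := by
  have h1 : HasDerivAt (fun w : ℂ => -w * (t:ℂ)) (-t) z := by
    simpa using ((hasDerivAt_id z).neg.mul_const (t:ℂ))
  have h2 := (h1.cexp).div_const (t:ℂ)
  refine h2.congr_deriv ?_
  have : (t:ℂ) ≠ 0 := Complex.ofReal_ne_zero.mpr ht
  rw [mul_neg, neg_div, mul_div_cancel_right₀ _ this]

lemma F_hasDerivAt {z₀ : ℂ} (hz : 0 < z₀.re) :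
    HasDerivAt F (-(Complex.exp (-z₀) / z₀)) z₀ := by
  set ε := z₀.re / 2 with hεdef
  have hε : 0 < ε := by positivity
  have hball : ∀ z ∈ Metric.ball z₀ ε, ε ≤ z.re := by
    intro z hz'
    have h1 : ‖z - z₀‖ < ε := by simpa [Metric.mem_ball, dist_eq_norm] using hz'
    have h2 : |(z - z₀).re| ≤ ‖z - z₀‖ := Complex.abs_re_le_norm _
    have : z₀.re - z.re ≤ ε := by
      rw [Complex.sub_re] at h2
      have := neg_le_of_abs_le h2
      linarith
    linarith [hεdef ▸ this]
  have key := hasDerivAt_integral_of_dominated_loc_of_deriv_le (μ := volume.restrict (Ioi 1))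
    (F := fun z (t : ℝ) => Complex.exp (-z * t) / t)
    (F' := fun z (t : ℝ) => -Complex.exp (-z * t))
    (bound := fun t : ℝ => Real.exp (-ε * t)) (x₀ := z₀) (Metric.ball_mem_nhds z₀ hε)
    (Filter.Eventually.of_forall fun z => meas1 z)
    (F_integrableOn hz)
    ((Complex.continuous_exp.comp (by continuity : Continuous fun t : ℝ => -z₀ * t)).neg).aestronglyMeasurable
    ?_ (exp_neg_integrableOn_Ioi 1 hε) ?_
  · rcases key with ⟨_, hd⟩
    have : (∫ t in Ioi (1:ℝ), -Complex.exp (-z₀ * t)) = -(Complex.exp (-z₀) / z₀) := by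
      rw [integral_neg, integral_exp_Ioi hz]
    rwa [this] at hd
  · filter_upwards [ae_restrict_mem measurableSet_Ioi] with t ht z hz'
    rw [norm_neg, norm_exp_mul]
    apply Real.exp_le_exp.mpr
    have h0 : (0:ℝ) ≤ t := le_of_lt (lt_trans one_pos ht)
    nlinarith [hball z hz']
  · filter_upwards [ae_restrict_mem measurableSet_Ioi] with t ht z _
    exact hasDerivAt_inner t (ne_of_gt (lt_trans one_pos ht)) z

lemma norm_one_sub_exp_le (w : ℂ) : ‖1 - Complex.exp w‖ ≤ ‖w‖ * Real.exp ‖w‖ := by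
  have h := (convex_closedBall (0:ℂ) ‖w‖).norm_image_sub_le_of_norm_hasDerivWithin_le
    (f := Complex.exp) (f' := Complex.exp) (C := Real.exp ‖w‖)
    (fun x _ => (Complex.hasDerivAt_exp x).hasDerivWithinAt)
    (fun x hx => by
      rw [Complex.norm_exp]
      exact Real.exp_le_exp.mpr ((Complex.re_le_norm x).trans (mem_closedBall_zero_iff.mp hx)))
    (Metric.mem_closedBall_self (norm_nonneg w)) (mem_closedBall_zero_iff.mpr le_rfl)
  rw [show (1:ℂ) - Complex.exp w = -(Complex.exp w - 1) by ring, norm_neg]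
  simpa [Complex.exp_zero, mul_comm] using h

lemma Ein_meas (z : ℂ) : AEStronglyMeasurable (fun t : ℝ => (1 - Complex.exp (-z * t)) / t)
    (volume.restrict (Ioc 0 1)) := by
  apply ContinuousOn.aestronglyMeasurable _ measurableSet_Ioc
  apply ContinuousOn.div
  · exact (continuous_const.sub (Complex.continuous_exp.comp (by continuity))).continuousOn
  · exact Complex.continuous_ofReal.continuousOn
  · intro t ht
    simp only [ne_eq, Complex.ofReal_eq_zero]
    exact ne_of_gt ht.1

lemma Ein_integrableOn (z : ℂ) :
    IntegrableOn (fun t : ℝ => (1 - Complex.exp (-z * t)) / t) (Ioc 0 1) := by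
  apply Integrable.mono' ((integrableOn_const (C := ‖z‖ * Real.exp ‖z‖)
    measure_Ioc_lt_top.ne)) (Ein_meas z)
  filter_upwards [ae_restrict_mem measurableSet_Ioc] with t ht
  rw [norm_div, Complex.norm_real, Real.norm_eq_abs, abs_of_pos ht.1, div_le_iff₀ ht.1]
  calc ‖1 - Complex.exp (-z * t)‖ ≤ ‖-z * (t:ℂ)‖ * Real.exp ‖-z * (t:ℂ)‖ :=
        norm_one_sub_exp_le _
    _ = ‖z‖ * t * Real.exp (‖z‖ * t) := by
        rw [norm_mul, norm_neg, Complex.norm_real, Real.norm_eq_abs, abs_of_pos ht.1]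
    _ ≤ ‖z‖ * t * Real.exp ‖z‖ := by
        have h1 : Real.exp (‖z‖ * t) ≤ Real.exp ‖z‖ := by
          apply Real.exp_le_exp.mpr
          nlinarith [norm_nonneg z, ht.1, ht.2]
        exact mul_le_mul_of_nonneg_left h1 (mul_nonneg (norm_nonneg z) ht.1.le)
    _ = ‖z‖ * Real.exp ‖z‖ * t := by ring

lemma Ein_hasDerivAt (z₀ : ℂ) :
    HasDerivAt Ein (∫ t in Ioc (0:ℝ) 1, Complex.exp (-z₀ * t)) z₀ := by
  have key := hasDerivAt_integral_of_dominated_loc_of_deriv_le (μ := volume.restrict (Ioc 0 1))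
    (F := fun z (t : ℝ) => (1 - Complex.exp (-z * t)) / t)
    (F' := fun z (t : ℝ) => Complex.exp (-z * t))
    (bound := fun _ : ℝ => Real.exp (‖z₀‖ + 1)) (x₀ := z₀) (Metric.ball_mem_nhds z₀ one_pos)
    (Filter.Eventually.of_forall fun z => Ein_meas z)
    (Ein_integrableOn z₀)
    ((Complex.continuous_exp.comp (by continuity : Continuous fun t : ℝ => -z₀ * t))).aestronglyMeasurable
    ?_ (integrableOn_const measure_Ioc_lt_top.ne) ?_
  · exact key.2
  · filter_upwards [ae_restrict_mem measurableSet_Ioc] with t ht z hz'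
    rw [norm_exp_mul]
    apply Real.exp_le_exp.mpr
    have h1 : ‖z - z₀‖ < 1 := by simpa [Metric.mem_ball, dist_eq_norm] using hz'
    have h2 : |z.re| ≤ ‖z₀‖ + 1 := by
      have := Complex.abs_re_le_norm z
      have hn : ‖z‖ ≤ ‖z₀‖ + 1 := by
        calc ‖z‖ = ‖z₀ + (z - z₀)‖ := by ring_nf
          _ ≤ ‖z₀‖ + ‖z - z₀‖ := norm_add_le _ _
          _ ≤ ‖z₀‖ + 1 := by linarith
      calc |z.re| ≤ ‖z‖ := Complex.abs_re_le_norm z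
        _ ≤ ‖z₀‖ + 1 := hn
    have := neg_abs_le z.re
    nlinarith [ht.1.le, ht.2, abs_nonneg z.re, norm_nonneg z₀]
  · filter_upwards [ae_restrict_mem measurableSet_Ioc] with t ht z _
    have h1 : HasDerivAt (fun w : ℂ => -w * (t:ℂ)) (-t) z := by
      simpa using ((hasDerivAt_id z).neg.mul_const (t:ℂ))
    have h2 := ((h1.cexp).const_sub 1).div_const (t:ℂ)
    refine h2.congr_deriv ?_
    have : (t:ℂ) ≠ 0 := Complex.ofReal_ne_zero.mpr (ne_of_gt ht.1)
    rw [mul_neg, neg_neg, mul_div_cancel_right₀ _ this]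

lemma integral_exp_Ioc (z : ℂ) (hz : z ≠ 0) :
    ∫ t in Ioc (0:ℝ) 1, Complex.exp (-z * t) = (1 - Complex.exp (-z)) / z := by
  rw [← intervalIntegral.integral_of_le zero_le_one,
    integral_exp_mul_complex (neg_ne_zero.mpr hz)]
  push_cast
  rw [mul_one, mul_zero, Complex.exp_zero, div_neg, ← neg_div, neg_sub]

lemma F_sub_F {a b : ℂ} (ha : 0 < a.re) (hb : 0 < b.re) :
    F a - F b = Complex.log b - Complex.log a + (Ein a - Ein b) := by
  set s : Set ℂ := {z | 0 < z.re} with hsdef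
  have hs : IsOpen s := isOpen_lt continuous_const Complex.continuous_re
  have hconv : Convex ℝ s := convex_halfSpace_re_gt 0
  set φ : ℂ → ℂ := fun z => F z + Complex.log z - Ein z with hφdef
  have hderiv : ∀ z ∈ s, HasDerivAt φ 0 z := by
    intro z hz
    have hzre : 0 < z.re := hz
    have hz0 : z ≠ 0 := fun h => by rw [h] at hzre; simp at hzre
    have h1 := F_hasDerivAt hzre
    have h2 := Complex.hasDerivAt_log (Or.inl hzre)
    have h3 := Ein_hasDerivAt z
    rw [integral_exp_Ioc z hz0] at h3
    have h4 := (h1.add h2).sub h3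
    refine h4.congr_deriv ?_
    field_simp
    ring
  have hdiff : DifferentiableOn ℂ φ s := fun z hz =>
    ((hderiv z hz).differentiableAt).differentiableWithinAt
  have hzero : ∀ x ∈ s, fderivWithin ℂ φ s x = 0 := by
    intro x hx
    rw [fderivWithin_of_isOpen hs hx, (hderiv x hx).hasFDerivAt.fderiv]
    ext1
    simp
  have hconst := hconv.is_const_of_fderivWithin_eq_zero hdiff hzero
    (show a ∈ s from ha) (show b ∈ s from hb)
  have : F a + Complex.log a - Ein a = F b + Complex.log b - Ein b := hconst
  linear_combination this

lemma Ein_analytic : AnalyticOnNhd ℝ Ein univ := by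
  have h : DifferentiableOn ℂ Ein univ := fun z _ =>
    ((Ein_hasDerivAt z).differentiableAt).differentiableWithinAt
  exact (h.analyticOnNhd isOpen_univ).restrictScalars

lemma h_analytic (c : ℂ) :
    AnalyticOnNhd ℝ (fun p : ℝ × ℝ =>
      Ein (c * p.2 - Complex.I * p.1) - Ein (c * p.2 + Complex.I * p.1)) univ := by
  have A : AnalyticOnNhd ℝ (fun p : ℝ × ℝ => ((p.1 : ℝ) : ℂ)) univ :=
    (Complex.ofRealCLM.comp (ContinuousLinearMap.fst ℝ ℝ ℝ)).analyticOnNhd univ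
  have B : AnalyticOnNhd ℝ (fun p : ℝ × ℝ => ((p.2 : ℝ) : ℂ)) univ :=
    (Complex.ofRealCLM.comp (ContinuousLinearMap.snd ℝ ℝ ℝ)).analyticOnNhd univ
  have h1 : AnalyticOnNhd ℝ (fun p : ℝ × ℝ => c * p.2 - Complex.I * p.1) univ :=
    (analyticOnNhd_const.mul B).sub (analyticOnNhd_const.mul A)
  have h2 : AnalyticOnNhd ℝ (fun p : ℝ × ℝ => c * p.2 + Complex.I * p.1) univ :=
    (analyticOnNhd_const.mul B).add (analyticOnNhd_const.mul A)
  exact (Ein_analytic.comp h1 (mapsTo_univ _ _)).sub (Ein_analytic.comp h2 (mapsTo_univ _ _))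

/-- for `α ≥ 0` the function
`G(Y₁, Y₂) = ∫_{|t| ≥ 1} e^{−|t|(1−iα)Y₂ + itY₁} / t dt` (for `Y₂ > 0`) equals
`Log((1−iα)Y₂ + iY₁) − Log((1−iα)Y₂ − iY₁)` plus a function real-analytic on all of `ℝ²`;
moreover this difference of logarithms equals `2i·arctan(Y₁/((1−iα)Y₂))`. -/
theorem arctan_singularity (α : ℝ) (hα : 0 ≤ α) :
    ∃ h : ℝ × ℝ → ℂ, AnalyticOnNhd ℝ h Set.univ ∧
      ∀ Y₁ Y₂ : ℝ, 0 < Y₂ →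
        ((∫ t in {t : ℝ | 1 ≤ |t|},
            Complex.exp (-((|t| : ℝ) : ℂ) * (1 - Complex.I * (α : ℂ)) * (Y₂ : ℂ) +
              Complex.I * (t : ℂ) * (Y₁ : ℂ)) / (t : ℂ)) =
          Complex.log ((1 - Complex.I * (α : ℂ)) * (Y₂ : ℂ) + Complex.I * (Y₁ : ℂ)) -
            Complex.log ((1 - Complex.I * (α : ℂ)) * (Y₂ : ℂ) - Complex.I * (Y₁ : ℂ)) +
            h (Y₁, Y₂)) ∧
        (Complex.log ((1 - Complex.I * (α : ℂ)) * (Y₂ : ℂ) + Complex.I * (Y₁ : ℂ)) -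
            Complex.log ((1 - Complex.I * (α : ℂ)) * (Y₂ : ℂ) - Complex.I * (Y₁ : ℂ)) =
          2 * Complex.I *
            arctanC ((Y₁ : ℂ) / ((1 - Complex.I * (α : ℂ)) * (Y₂ : ℂ)))) := by
  set c : ℂ := 1 - Complex.I * α with hc
  refine ⟨fun p => Ein (c * p.2 - Complex.I * p.1) - Ein (c * p.2 + Complex.I * p.1),
    h_analytic c, ?_⟩
  intro Y₁ Y₂ hY
  set a : ℂ := c * Y₂ - Complex.I * Y₁ with hadef
  set b : ℂ := c * Y₂ + Complex.I * Y₁ with hbdef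
  have hare : a.re = Y₂ := by simp [hadef, hc]
  have hbre : b.re = Y₂ := by simp [hbdef, hc]
  have ha : 0 < a.re := hare ▸ hY
  have hb : 0 < b.re := hbre ▸ hY
  have ha0 : a ≠ 0 := fun h => by rw [h] at ha; simp at ha
  have hc0 : c ≠ 0 := by
    intro h
    have := congrArg Complex.re h
    simp [hc] at this
  have hY0 : (Y₂ : ℂ) ≠ 0 := Complex.ofReal_ne_zero.mpr hY.ne'
  have hcY : c * (Y₂ : ℂ) ≠ 0 := mul_ne_zero hc0 hY0
  set Φ : ℝ → ℂ := fun t =>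
    Complex.exp (-((|t| : ℝ) : ℂ) * c * (Y₂ : ℂ) + Complex.I * (t : ℂ) * (Y₁ : ℂ)) / (t : ℂ)
    with hΦ
  constructor
  · -- the integral identity
    have hSeq : {t : ℝ | 1 ≤ |t|} = Iic (-1) ∪ Ici 1 := by
      ext t
      simp only [mem_setOf_eq, mem_union, mem_Iic, mem_Ici, le_abs]
      rw [or_comm, le_neg]
    have hEq1 : EqOn Φ (fun t => Complex.exp (-a * t) / t) (Ici 1) := by
      intro t ht
      simp only [hΦ, hadef]
      rw [abs_of_pos (lt_of_lt_of_le one_pos ht)]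
      congr 1
      push_cast
      ring
    have hEq2 : EqOn (fun x => Φ (-x)) (fun t => -(Complex.exp (-b * t) / t)) (Ici 1) := by
      intro t ht
      simp only [hΦ, hbdef]
      rw [abs_neg, abs_of_pos (lt_of_lt_of_le one_pos ht)]
      push_cast
      rw [div_neg, neg_inj]
      congr 1
      ring
    have hInt1 : IntegrableOn Φ (Ici 1) :=
      (integrableOn_congr_fun hEq1 measurableSet_Ici).mpr
        (Iff.mpr integrableOn_Ici_iff_integrableOn_Ioi (F_integrableOn ha))
    have hIntc : IntegrableOn (fun x => Φ (-x)) (Ici 1) :=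
      (integrableOn_congr_fun hEq2 measurableSet_Ici).mpr
        ((Iff.mpr integrableOn_Ici_iff_integrableOn_Ioi (F_integrableOn hb)).neg)
    have hInt2 : IntegrableOn Φ (Iic (-1)) := by
      have hmp := (Measure.measurePreserving_neg (volume : Measure ℝ)).integrableOn_comp_preimage
        (Homeomorph.neg ℝ).measurableEmbedding (f := Φ) (s := Iic (-1))
      rw [← hmp]
      have hpre : (Neg.neg ⁻¹' Iic (-1) : Set ℝ) = Ici 1 := by
        ext x
        simp [neg_le]
      rw [hpre]
      exact hIntc
    have hI1 : ∫ t in Ici (1:ℝ), Φ t = F a := by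
      rw [setIntegral_congr_fun measurableSet_Ici hEq1, integral_Ici_eq_integral_Ioi]
      rfl
    have hI2 : ∫ t in Iic (-1:ℝ), Φ t = -(F b) := by
      rw [← integral_comp_neg_Ioi 1 Φ,
        setIntegral_congr_fun measurableSet_Ioi (hEq2.mono Ioi_subset_Ici_self),
        integral_neg]
      rfl
    have hsplit : ∫ t in {t : ℝ | 1 ≤ |t|}, Φ t = -(F b) + F a := by
      rw [hSeq, setIntegral_union (Iic_disjoint_Ici.mpr (by norm_num)) measurableSet_Ici hInt2 hInt1,
        hI1, hI2]
    calc ∫ t in {t : ℝ | 1 ≤ |t|}, Φ t = F a - F b := by rw [hsplit]; ring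
      _ = Complex.log b - Complex.log a + (Ein a - Ein b) := F_sub_F ha hb
  · -- the arctangent identity
    have h1 : (1 + Complex.I * ((Y₁ : ℂ) / (c * Y₂))) = b / (c * Y₂) := by
      rw [hbdef]
      field_simp
    have h2 : (1 - Complex.I * ((Y₁ : ℂ) / (c * Y₂))) = a / (c * Y₂) := by
      rw [hadef]
      field_simp
    have hratio : (1 + Complex.I * ((Y₁ : ℂ) / (c * Y₂))) /
        (1 - Complex.I * ((Y₁ : ℂ) / (c * Y₂))) = b / a := by
      rw [h1, h2, div_div_div_cancel_right₀]
      exact hcY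
    rw [arctanC, hratio, log_div_of_re_pos ha hb, ← mul_assoc,
      mul_inv_cancel₀ (by simp : (2 * Complex.I : ℂ) ≠ 0), one_mul]
end
end
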